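/- Let K ≥ 1 be an integer and φ ∈ ℝ^K. Then inf_{q∈Δ_K} Σ_{i=1}^K ( q(i) − φ_i )^+ = Σ_{i=1}^K (−φ_i)^+ + ( 1 − Σ_{i=1}^K (φ_i)^+ )^+, and the infimum is attained by some q ∈ Δ_K. -/

import Mathlib

lemma key_ineq (q φ : ℝ) (hq : 0 ≤ q) :
    max (-φ) 0 + q - max φ 0 ≤ max (q - φ) 0 := by
  have h1 : q - φ ≤ max (q - φ) 0 := le_max_left _ _
  have h2 : (0:ℝ) ≤ max (q - φ) 0 := le_max_right _ _
  rcases le_total φ 0 with h | h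
  · rw [max_eq_right h, max_eq_left (by linarith)]; linarith
  · rw [max_eq_left h, max_eq_right (by linarith)]; linarith

/-- **Value of the water-filling piecewise-linear program.**
Let `K ≥ 1` and `φ ∈ ℝ^K`. Then
`inf_{q ∈ Δ_K} Σ_i (q(i) - φ_i)⁺ = Σ_i (-φ_i)⁺ + (1 - Σ_i (φ_i)⁺)⁺`,
and the infimum is attained by some `q ∈ Δ_K`. -/
theorem stmt11 (K : ℕ) (hK : 1 ≤ K) (φ : Fin K → ℝ) :
    IsLeast
      {r : ℝ | ∃ q : Fin K → ℝ,
        (∀ i, 0 ≤ q i) ∧ ∑ i, q i = 1 ∧ r = ∑ i, max (q i - φ i) 0}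
      ((∑ i, max (-φ i) 0) + max (1 - ∑ i, max (φ i) 0) 0) := by
  set S : ℝ := ∑ i, max (φ i) 0 with hS
  have hK0 : (0:ℝ) < K := by exact_mod_cast hK
  constructor
  · -- membership: construct optimal q
    rcases le_total S 1 with h | h
    · -- S ≤ 1 : q i = φ i⁺ + (1-S)/K
      set c : ℝ := (1 - S) / K with hc
      have hc0 : 0 ≤ c := div_nonneg (by linarith) hK0.le
      refine ⟨fun i => max (φ i) 0 + c, fun i => by positivity, ?_, ?_⟩
      · rw [Finset.sum_add_distrib, Finset.sum_const, Finset.card_univ,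
          Fintype.card_fin, nsmul_eq_mul, hc]
        field_simp
        linarith
      · have hterm : ∀ i, max (max (φ i) 0 + c - φ i) 0 = max (-φ i) 0 + c := by
          intro i
          have h1 : max (φ i) 0 - φ i = max (-φ i) 0 := by
            rcases le_total (φ i) 0 with h' | h'
            · rw [max_eq_right h', max_eq_left (by linarith)]; ring
            · rw [max_eq_left h', max_eq_right (by linarith)]; ring
          have h2 : (0:ℝ) ≤ max (-φ i) 0 + c := by positivity
          rw [show max (φ i) 0 + c - φ i = max (-φ i) 0 + c by rw [← h1]; ring,
            max_eq_left h2]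
        rw [Finset.sum_congr rfl (fun i _ => hterm i), Finset.sum_add_distrib,
          Finset.sum_const, Finset.card_univ, Fintype.card_fin, nsmul_eq_mul, hc,
          max_eq_left (by linarith)]
        field_simp
    · -- 1 ≤ S : q i = φ i⁺ / S
      have hS0 : (0:ℝ) < S := lt_of_lt_of_le one_pos h
      refine ⟨fun i => max (φ i) 0 / S, fun i => by positivity, ?_, ?_⟩
      · rw [← Finset.sum_div, ← hS, div_self hS0.ne']
      · have hterm : ∀ i, max (max (φ i) 0 / S - φ i) 0 = max (-φ i) 0 := by
          intro i
          have hub : max (φ i) 0 / S ≤ max (φ i) 0 := by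
            apply div_le_self (le_max_right _ _) h
          have hlb : (0:ℝ) ≤ max (φ i) 0 / S := by positivity
          have h1 : max (φ i) 0 - φ i = max (-φ i) 0 := by
            rcases le_total (φ i) 0 with h' | h'
            · rw [max_eq_right h', max_eq_left (by linarith)]; ring
            · rw [max_eq_left h', max_eq_right (by linarith)]; ring
          apply le_antisymm
          · apply max_le _ (by rw [← h1]; linarith [le_max_left (φ i) 0])
            rw [← h1]; linarith
          · exact max_le_max (by linarith) le_rfl
        rw [Finset.sum_congr rfl (fun i _ => hterm i),
          max_eq_right (by linarith), add_zero]
  · -- lower bound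
    rintro r ⟨q, hq0, hqs, rfl⟩
    rcases le_total S 1 with h | h
    · rw [max_eq_left (by linarith)]
      have : ∑ i, (max (-φ i) 0 + q i - max (φ i) 0) ≤ ∑ i, max (q i - φ i) 0 :=
        Finset.sum_le_sum fun i _ => key_ineq (q i) (φ i) (hq0 i)
      have heq : ∑ i, (max (-φ i) 0 + q i - max (φ i) 0)
          = (∑ i, max (-φ i) 0) + 1 - S := by
        rw [hS]
        simp only [Finset.sum_sub_distrib, Finset.sum_add_distrib, hqs]
      linarith
    · rw [max_eq_right (by linarith), add_zero]
      exact Finset.sum_le_sum fun i _ =>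
        max_le_max (by linarith [hq0 i]) le_rfl
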